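/- Let T have the wandering subspace property. For every bounded point evaluation w, the operator E_w E_w* is invertible on ker T*. Moreover E_0 E_0* is the identity on ker T*. -/

import Mathlib

open ContinuousLinearMap Submodule Filter

noncomputable section

variable {H : Type*} [NormedAddCommGroup H] [InnerProductSpace ℂ H] [CompleteSpace H]

/-- The wandering subspace `ker T*`. -/
def kerAdj (T : H →L[ℂ] H) : Submodule ℂ H := LinearMap.ker (ContinuousLinearMap.adjoint T : H →ₗ[ℂ] H)

/-- `T` has the wandering subspace property: the closed linear span of
`⋃ₙ Tⁿ(ker T*)` is all of `H`. -/
def WSP (T : H →L[ℂ] H) : Prop :=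
  (⨆ n : ℕ, (kerAdj T).map ((T ^ n : H →L[ℂ] H) : H →ₗ[ℂ] H)).topologicalClosure = ⊤

/-- `w` is a bounded point evaluation for `T`: `‖p(w)‖ ≤ c ‖p(T)‖` for all
`ker T*`-valued polynomials `p`, where `p(T) = Σ Tⁿ xₙ` for `p(z) = Σ xₙ zⁿ`. -/
def IsBPE (T : H →L[ℂ] H) (w : ℂ) : Prop :=
  ∃ c > (0 : ℝ), ∀ (k : ℕ) (x : ℕ → H), (∀ n, x n ∈ kerAdj T) →
    ‖∑ n ∈ Finset.range (k + 1), w ^ n • x n‖ ≤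
      c * ‖∑ n ∈ Finset.range (k + 1), (T ^ n) (x n)‖

/-- `E` is the (continuous extension of the) evaluation operator at `w`:
it takes values in `ker T*` and sends `p(T)` to `p(w)`. -/
def IsEval (T : H →L[ℂ] H) (w : ℂ) (E : H →L[ℂ] H) : Prop :=
  (∀ y, E y ∈ kerAdj T) ∧
    ∀ (k : ℕ) (x : ℕ → H), (∀ n, x n ∈ kerAdj T) →
      E (∑ n ∈ Finset.range (k + 1), (T ^ n) (x n)) =
        ∑ n ∈ Finset.range (k + 1), w ^ n • x n

local notation "⟪" x ", " y "⟫" => @inner ℂ _ _ x y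

/-- Auxiliary: `E (Tⁿ v) = wⁿ • v` for `v ∈ ker T*`. -/
lemma eval_pow {T : H →L[ℂ] H} {w : ℂ} {E : H →L[ℂ] H} (hE : IsEval T w E)
    {v : H} (hv : v ∈ kerAdj T) (n : ℕ) : E ((T ^ n) v) = w ^ n • v := by
  have h := hE.2 n (fun m => if m = n then v else 0)
    (fun m => by by_cases h : m = n <;> simp [h, hv, Submodule.zero_mem])
  simpa [apply_ite, smul_ite] using h

/-- Auxiliary: `E` is the identity on `ker T*`. -/
lemma eval_id {T : H →L[ℂ] H} {w : ℂ} {E : H →L[ℂ] H} (hE : IsEval T w E)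
    {v : H} (hv : v ∈ kerAdj T) : E v = v := by
  simpa using eval_pow hE hv 0

/-- Auxiliary: `re ⟪x, E E* x⟫ = ‖E* x‖²`. -/
lemma re_inner_EEadj (E : H →L[ℂ] H) (x : H) :
    RCLike.re ⟪x, E (ContinuousLinearMap.adjoint E x)⟫ =
      ‖ContinuousLinearMap.adjoint E x‖ ^ 2 := by
  rw [← ContinuousLinearMap.adjoint_inner_left, inner_self_eq_norm_sq]

/-- Auxiliary: `‖x‖² ≤ ‖E* x‖²` for `x ∈ ker T*`. -/
lemma eval_adj_lower {T : H →L[ℂ] H} {w : ℂ} {E : H →L[ℂ] H} (hE : IsEval T w E)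
    {x : H} (hx : x ∈ kerAdj T) : ‖x‖ ^ 2 ≤ ‖ContinuousLinearMap.adjoint E x‖ ^ 2 := by
  have h1 : ‖x‖ ^ 2 ≤ ‖ContinuousLinearMap.adjoint E x‖ * ‖x‖ := by
    calc ‖x‖ ^ 2 = RCLike.re ⟪x, x⟫ := (inner_self_eq_norm_sq x).symm
      _ = RCLike.re ⟪x, E x⟫ := by rw [eval_id hE hx]
      _ = RCLike.re ⟪ContinuousLinearMap.adjoint E x, x⟫ := by
            rw [ContinuousLinearMap.adjoint_inner_left]
      _ ≤ ‖ContinuousLinearMap.adjoint E x‖ * ‖x‖ := re_inner_le_norm _ _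
  rcases eq_or_ne x 0 with rfl | hx0
  · simp
  have hxpos : (0:ℝ) < ‖x‖ := norm_pos_iff.mpr hx0
  nlinarith

/-- Auxiliary: `‖x‖ ≤ ‖E E* x‖` for `x ∈ ker T*`. -/
lemma eval_lower {T : H →L[ℂ] H} {w : ℂ} {E : H →L[ℂ] H} (hE : IsEval T w E)
    {x : H} (hx : x ∈ kerAdj T) : ‖x‖ ≤ ‖E (ContinuousLinearMap.adjoint E x)‖ := by
  have h2 := re_inner_EEadj E x
  have h1 := eval_adj_lower hE hx
  have h4 : ‖ContinuousLinearMap.adjoint E x‖ ^ 2 ≤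
      ‖x‖ * ‖E (ContinuousLinearMap.adjoint E x)‖ := by
    calc ‖ContinuousLinearMap.adjoint E x‖ ^ 2
        = RCLike.re ⟪x, E (ContinuousLinearMap.adjoint E x)⟫ := h2.symm
      _ ≤ ‖x‖ * ‖E (ContinuousLinearMap.adjoint E x)‖ := re_inner_le_norm _ _
  rcases eq_or_ne x 0 with rfl | hx0
  · simp
  have hxpos : (0:ℝ) < ‖x‖ := norm_pos_iff.mpr hx0
  nlinarith

set_option maxHeartbeats 1000000 in
/-- `E_w E_w*` is invertible on `ker T*` for every bounded point evaluation `w`;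
moreover `E_0 E_0*` is the identity on `ker T*`. -/
theorem stmt_5 [TopologicalSpace.SeparableSpace H] (T : H →L[ℂ] H) (hT : WSP T) :
    (∀ (w : ℂ), IsBPE T w → ∀ (E : H →L[ℂ] H), IsEval T w E →
      ((∀ y ∈ kerAdj T, ∃ x ∈ kerAdj T, E (ContinuousLinearMap.adjoint E x) = y) ∧
        ∃ c > (0 : ℝ), ∀ x ∈ kerAdj T, ‖x‖ ≤ c * ‖E (ContinuousLinearMap.adjoint E x)‖)) ∧
    (∀ (E : H →L[ℂ] H), IsEval T 0 E →
      ∀ x ∈ kerAdj T, E (ContinuousLinearMap.adjoint E x) = x) := by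
  constructor
  · intro w _hbpe E hE
    -- work on the Hilbert space `K = ker T*`
    set K : Submodule ℂ H := kerAdj T with hK
    have hKc : IsClosed (K : Set H) :=
      ContinuousLinearMap.isClosed_ker (ContinuousLinearMap.adjoint T)
    haveI : CompleteSpace K := hKc.completeSpace_coe
    set A : H →L[ℂ] H := E ∘L ContinuousLinearMap.adjoint E with hA
    have hAapp : ∀ y : H, A y = E (ContinuousLinearMap.adjoint E y) := fun _ => rfl
    have hAmem : ∀ y : H, A y ∈ K := fun y => hE.1 _
    set B : K →L[ℂ] K := (A ∘L K.subtypeL).codRestrict K (fun x => hAmem _) with hB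
    have hBapp : ∀ x : K, (B x : H) = A (x : H) := fun _ => rfl
    have hlow : ∀ x : K, ‖x‖ ≤ ‖B x‖ := by
      intro x
      have h := eval_lower hE x.2
      calc ‖x‖ = ‖(x : H)‖ := rfl
        _ ≤ ‖E (ContinuousLinearMap.adjoint E (x : H))‖ := h
        _ = ‖(B x : H)‖ := by rw [hBapp x, hAapp]
        _ = ‖B x‖ := rfl
    have hanti : AntilipschitzWith 1 B :=
      B.antilipschitz_of_bound (by simpa using hlow)
    have hclosed : IsClosed (Set.range B) := hanti.isClosed_range B.uniformContinuous
    have hrange : ((LinearMap.range (B : K →ₗ[ℂ] K) : Submodule ℂ K) : Set K) = Set.range B := by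
      ext y; simp [LinearMap.mem_range]
    haveI : CompleteSpace (LinearMap.range (B : K →ₗ[ℂ] K) : Submodule ℂ K) :=
      (hrange ▸ hclosed : IsClosed ((LinearMap.range (B : K →ₗ[ℂ] K) : Submodule ℂ K) : Set K)).completeSpace_coe
    have hdense : (LinearMap.range (B : K →ₗ[ℂ] K))ᗮ = ⊥ := by
      rw [Submodule.eq_bot_iff]
      intro y hy
      have h0 : ⟪(B y : K), y⟫ = 0 := hy (B y) (LinearMap.mem_range_self _ y)
      have h0H : ⟪((B y : K) : H), ((y : K) : H)⟫ = 0 := by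
        rw [← Submodule.coe_inner]; exact h0
      have h0' : ⟪((y:K) : H), A ((y:K) : H)⟫ = 0 := by
        rw [← inner_conj_symm, ← hBapp y, h0H, map_zero]
      have hge : ‖((y:K) : H)‖ ^ 2 ≤ ‖ContinuousLinearMap.adjoint E ((y:K):H)‖ ^ 2 :=
        eval_adj_lower hE y.2
      have h2 : ‖ContinuousLinearMap.adjoint E ((y:K):H)‖ ^ 2 = 0 := by
        rw [← re_inner_EEadj E ((y:K):H), ← hAapp, h0', map_zero]
      have hy0 : ((y:K) : H) = 0 := by
        have : ‖((y:K) : H)‖ ^ 2 ≤ 0 := h2 ▸ hge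
        have hn := norm_nonneg ((y:K) : H)
        have : ‖((y:K) : H)‖ = 0 := by nlinarith
        exact norm_eq_zero.mp this
      exact Subtype.ext hy0
    have htop : LinearMap.range (B : K →ₗ[ℂ] K) = ⊤ := by
      have h := (LinearMap.range (B : K →ₗ[ℂ] K)).orthogonal_orthogonal
      rw [hdense] at h
      rw [← h, Submodule.bot_orthogonal_eq_top]
    refine ⟨?_, ⟨1, one_pos, fun x hx => by simpa using eval_lower hE hx⟩⟩
    intro y hy
    have hmem : (⟨y, hy⟩ : K) ∈ LinearMap.range (B : K →ₗ[ℂ] K) := by rw [htop]; trivial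
    obtain ⟨x, hx⟩ := hmem
    refine ⟨(x : H), x.2, ?_⟩
    have h := congrArg (Subtype.val) hx
    rw [ContinuousLinearMap.coe_coe, hBapp x, hAapp] at h
    exact h
  · -- the `w = 0` case: `E* x = x` for `x ∈ ker T*`.
    intro E hE x hx
    have hadj : ContinuousLinearMap.adjoint E x = x := by
      set f : H →L[ℂ] ℂ := (innerSL ℂ x) ∘L (E - 1) with hf
      have hfapp : ∀ y : H, f y = ⟪x, E y - y⟫ := fun _ => rfl
      have hker : (⨆ n : ℕ, (kerAdj T).map ((T ^ n : H →L[ℂ] H) : H →ₗ[ℂ] H)) ≤ LinearMap.ker (f : H →ₗ[ℂ] ℂ) := by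
        apply iSup_le
        intro n y hy
        obtain ⟨v, hv, rfl⟩ := hy
        have hev : E ((T ^ n) v) = (0:ℂ) ^ n • v := eval_pow hE hv n
        rw [LinearMap.mem_ker, ContinuousLinearMap.coe_coe, ContinuousLinearMap.coe_coe, hfapp]
        rcases Nat.eq_zero_or_pos n with rfl | hn
        · rw [hev]; simp
        · have hzn : (0:ℂ) ^ n = 0 := zero_pow hn.ne'
          have h1 : ⟪x, (T ^ n) v⟫ = 0 := by
            rw [← inner_conj_symm]
            obtain ⟨m, rfl⟩ := Nat.exists_eq_succ_of_ne_zero hn.ne'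
            have hTn : (T ^ (m + 1)) v = T ((T ^ m) v) := by
              rw [pow_succ']; rfl
            have hx0 : ContinuousLinearMap.adjoint T x = 0 := hx
            rw [hTn, ← ContinuousLinearMap.adjoint_inner_right, hx0, inner_zero_right, map_zero]
          rw [hev, hzn, zero_smul, zero_sub, inner_neg_right, h1, neg_zero]
      have hcl : (⨆ n : ℕ, (kerAdj T).map ((T ^ n : H →L[ℂ] H) : H →ₗ[ℂ] H)).topologicalClosure ≤ LinearMap.ker (f : H →ₗ[ℂ] ℂ) :=
        Submodule.topologicalClosure_minimal _ hker
          (ContinuousLinearMap.isClosed_ker f)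
      rw [hT] at hcl
      have hker' : ∀ y : H, ⟪x, E y⟫ = ⟪x, y⟫ := by
        intro y
        have := hcl (Submodule.mem_top : y ∈ ⊤)
        rw [LinearMap.mem_ker] at this
        rw [ContinuousLinearMap.coe_coe, hfapp, inner_sub_right] at this
        linear_combination this
      refine ext_inner_left ℂ (fun v => ?_)
      rw [ContinuousLinearMap.adjoint_inner_right]
      rw [← inner_conj_symm, hker' v, inner_conj_symm]
    rw [hadj]
    exact eval_id hE hx
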